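/- Let p₁ := ( (√5 − √(4−√5))/4 , (√(5+2√5) − √(2+3/√5))/4 ) ∈ ℝ² (Euclidean norm), and let R be the rotation of ℝ² about the origin by angle 2π/5, i.e. R(u) = (cos(2π/5)·u₁ − sin(2π/5)·u₂, sin(2π/5)·u₁ + cos(2π/5)·u₂). Then dist p₁ (R p₁) = (√5 − √(4−√5))/2. -/

import Mathlib

/-- The vertex `p₁` of the small central pentagon in the partition of the regular
unit pentagon. -/
noncomputable def innerVertex : EuclideanSpace ℝ (Fin 2) :=
  !₂[(Real.sqrt 5 - Real.sqrt (4 - Real.sqrt 5)) / 4,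
    (Real.sqrt (5 + 2 * Real.sqrt 5) - Real.sqrt (2 + 3 / Real.sqrt 5)) / 4]

/-- Rotation of `ℝ²` about the origin by the angle `θ`. -/
noncomputable def rotByAngle (θ : ℝ) (u : EuclideanSpace ℝ (Fin 2)) :
    EuclideanSpace ℝ (Fin 2) :=
  !₂[Real.cos θ * u 0 - Real.sin θ * u 1, Real.sin θ * u 0 + Real.cos θ * u 1]

lemma cos_two_pi_div_five : Real.cos (2 * Real.pi / 5) = (Real.sqrt 5 - 1) / 4 := by
  have h : (2 : ℝ) * Real.pi / 5 = 2 * (Real.pi / 5) := by ring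
  have h5 : Real.sqrt 5 ^ 2 = 5 := Real.sq_sqrt (by norm_num)
  rw [h, Real.cos_two_mul, Real.cos_pi_div_five]
  nlinarith [h5]

/-- The side length of the small central pentagon of the tile partition equals
`s = (√5 − √(4−√5))/2 ≈ 0.45`. -/
theorem inner_pentagon_side_length :
    dist innerVertex (rotByAngle (2 * Real.pi / 5) innerVertex) =
      (Real.sqrt 5 - Real.sqrt (4 - Real.sqrt 5)) / 2 := by
  set a := Real.sqrt 5 with ha
  set b := Real.sqrt (4 - a) with hb
  set d := Real.sqrt (5 + 2 * a) with hd
  set e := Real.sqrt (2 + 3 / a) with he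
  have ha2 : a ^ 2 = 5 := Real.sq_sqrt (by norm_num)
  have hapos : (0 : ℝ) < a := Real.sqrt_pos.2 (by norm_num)
  have halt : a < 3 := by nlinarith
  have hb2 : b ^ 2 = 4 - a := Real.sq_sqrt (by nlinarith)
  have hd2 : d ^ 2 = 5 + 2 * a := Real.sq_sqrt (by nlinarith)
  have he2 : e ^ 2 = 2 + 3 / a := Real.sq_sqrt (by positivity)
  have he2s : e ^ 2 = 2 + 3 * a / 5 := by
    rw [he2]
    have : (3 : ℝ) / a = 3 * a / 5 := by
      rw [div_eq_div_iff hapos.ne' (by norm_num : (5:ℝ) ≠ 0)]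
      linear_combination (-3 : ℝ) * ha2
    rw [this]
  have hbpos : (0 : ℝ) ≤ b := Real.sqrt_nonneg _
  have hdpos : (0 : ℝ) ≤ d := Real.sqrt_nonneg _
  have hepos : (0 : ℝ) ≤ e := Real.sqrt_nonneg _
  have hde2 : d ^ 2 * e ^ 2 = 16 + 7 * a := by
    rw [hd2, he2s]; linear_combination (6/5 : ℝ) * ha2
  -- key identity: (5 - a) * (d * e) = (3 + a) * (a * b)
  have hkey : (5 - a) * (d * e) = (3 + a) * (a * b) := by
    have h1 : (0 : ℝ) ≤ (5 - a) * (d * e) :=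
      mul_nonneg (by nlinarith) (mul_nonneg hdpos hepos)
    have h2 : (0 : ℝ) ≤ (3 + a) * (a * b) := by positivity
    have hsq : ((5 - a) * (d * e)) ^ 2 = ((3 + a) * (a * b)) ^ 2 := by
      linear_combination (5 - a) ^ 2 * hde2 - (3 + a) ^ 2 * a ^ 2 * hb2 +
        (a ^ 3 + 2 * a ^ 2 - 3 * a - 80) * ha2
    calc (5 - a) * (d * e) = Real.sqrt (((5 - a) * (d * e)) ^ 2) :=
          (Real.sqrt_sq h1).symm
      _ = Real.sqrt (((3 + a) * (a * b)) ^ 2) := by rw [hsq]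
      _ = (3 + a) * (a * b) := Real.sqrt_sq h2
  -- main algebraic identity
  have hmain : (5 - a) * ((a - b) ^ 2 + (d - e) ^ 2) = 8 * (a - b) ^ 2 := by
    have h1 : (a - b) ^ 2 = 9 - a - 2 * (a * b) := by linear_combination ha2 + hb2
    have h2 : (d - e) ^ 2 = 7 + 13 * a / 5 - 2 * (d * e) := by
      linear_combination hd2 + he2s
    linear_combination (5 - a - 8) * h1 + (5 - a) * h2 - 2 * hkey - (8/5) * ha2
  have hcos := cos_two_pi_div_five
  have hsc := Real.sin_sq_add_cos_sq (2 * Real.pi / 5)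
  rw [EuclideanSpace.dist_eq, Fin.sum_univ_two]
  have hx : innerVertex 0 = (a - b) / 4 := by simp [innerVertex, ha, hb]
  have hy : innerVertex 1 = (d - e) / 4 := by simp [innerVertex, ha, hd, he]
  have hrx : rotByAngle (2 * Real.pi / 5) innerVertex 0 =
      Real.cos (2 * Real.pi / 5) * ((a - b) / 4) -
        Real.sin (2 * Real.pi / 5) * ((d - e) / 4) := by
    simp [rotByAngle, hx, hy]
  have hry : rotByAngle (2 * Real.pi / 5) innerVertex 1 =
      Real.sin (2 * Real.pi / 5) * ((a - b) / 4) +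
        Real.cos (2 * Real.pi / 5) * ((d - e) / 4) := by
    simp [rotByAngle, hx, hy]
  rw [hx, hy, hrx, hry]
  simp only [Real.dist_eq, sq_abs]
  have hba : b ≤ a := by
    have : b ^ 2 ≤ a ^ 2 := by nlinarith
    nlinarith
  have hgoalpos : (0 : ℝ) ≤ (a - b) / 2 := by linarith
  rw [show ((a - b) / 2 : ℝ) = Real.sqrt (((a - b) / 2) ^ 2) from
    (Real.sqrt_sq hgoalpos).symm]
  congr 1
  set c := Real.cos (2 * Real.pi / 5) with hcdef
  set s := Real.sin (2 * Real.pi / 5) with hsdef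
  have hc : c = (a - 1) / 4 := hcos
  linear_combination (((a - b) / 4) ^ 2 + ((d - e) / 4) ^ 2) * hsc -
    2 * (((a - b) / 4) ^ 2 + ((d - e) / 4) ^ 2) * hc + (1/32) * hmain
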